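/- With the same setup but with Q₂ : [0,T] → L(X₂) strongly continuous and Ω⃗_{t,s} the unique strongly continuous uniformly bounded backward evolution family satisfying Ω⃗_{t,s} = U⃗_{t,s} − ∫_t^s U⃗_{t,r} Q₂(r) Ω⃗_{r,s} dr, for every G ∈ L(X₁,X₂) the function P(t) = Ω⃗_{t,T} G U⃖_{T,t} + ∫_t^T Ω⃗_{t,r} Q₁₂(r) U⃖_{r,t} dr is the unique strongly continuous solution of P(t) = U⃗_{t,T} G U⃖_{T,t} + ∫_t^T U⃗_{t,r}[Q₁₂(r) − Q₂(r)P(r)] U⃖_{r,t} dr. -/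
import Mathlib

open MeasureTheory intervalIntegral Set Filter Topology


open MeasureTheory intervalIntegral Set Filter Topology

section Aux
variable {Y Z : Type*} [NormedAddCommGroup Y] [NormedSpace ℝ Y]
  [NormedAddCommGroup Z] [NormedSpace ℝ Z]

/-- strongly continuous uniformly bounded operator family applied to a continuous path. -/
lemma aux_strong_apply_cont (A : ℝ → Y →L[ℝ] Z) (s : Set ℝ) (M : ℝ)
    (hM : ∀ r ∈ s, ‖A r‖ ≤ M) (hA : ∀ y, ContinuousOn (fun r => A r y) s)
    {f : ℝ → Y} (hf : ContinuousOn f s) :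
    ContinuousOn (fun r => A r (f r)) s := by
  intro r₀ hr₀
  have h1 : Tendsto (fun r => A r (f r₀)) (𝓝[s] r₀) (𝓝 (A r₀ (f r₀))) := hA (f r₀) r₀ hr₀
  have h2 : Tendsto (fun r => A r (f r) - A r (f r₀)) (𝓝[s] r₀) (𝓝 0) := by
    apply squeeze_zero_norm' (a := fun r => M * ‖f r - f r₀‖)
    · filter_upwards [self_mem_nhdsWithin] with r hr
      have : A r (f r) - A r (f r₀) = A r (f r - f r₀) := by simp
      rw [this]
      exact (A r).le_of_opNorm_le (hM r hr) _
    · have : Tendsto (fun r => f r - f r₀) (𝓝[s] r₀) (𝓝 0) := by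
        have hf' : Tendsto f (𝓝[s] r₀) (𝓝 (f r₀)) := hf r₀ hr₀
        simpa using hf'.sub (tendsto_const_nhds (x := f r₀))
      simpa using (this.norm.const_mul M)
  have := h2.add h1
  simp only [sub_add_cancel, zero_add] at this
  exact this

/-- uniform boundedness for a strongly continuous family on a compact interval. -/
lemma aux_bs [CompleteSpace Y] (a b : ℝ) (Q : ℝ → Y →L[ℝ] Z)
    (hQ : ∀ y, ContinuousOn (fun r => Q r y) (Icc a b)) :
    ∃ M, 0 ≤ M ∧ ∀ r ∈ Icc a b, ‖Q r‖ ≤ M := by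
  obtain ⟨C, hC⟩ := banach_steinhaus (g := fun r : Icc a b => Q r) (fun y => by
    obtain ⟨C, hC⟩ := isCompact_Icc.exists_bound_of_continuousOn (hQ y)
    exact ⟨C, fun i => hC i i.2⟩)
  exact ⟨max C 0, le_max_right _ _, fun r hr => le_trans (hC ⟨r, hr⟩) (le_max_left _ _)⟩

/-- a strongly-integrable operator family integrates to a continuous linear map. -/
lemma aux_clm_integral {X₁ X₂ : Type*} [NormedAddCommGroup X₁] [NormedSpace ℝ X₁]
    [NormedAddCommGroup X₂] [NormedSpace ℝ X₂] [CompleteSpace X₂]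
    (f : ℝ → X₁ →L[ℝ] X₂) (a b C : ℝ)
    (hint : ∀ x, IntervalIntegrable (fun r => f r x) volume a b)
    (hC : 0 ≤ C) (hb : ∀ r ∈ Set.uIcc a b, ‖f r‖ ≤ C) :
    ∃ J : X₁ →L[ℝ] X₂, (∀ x, J x = ∫ r in a..b, f r x) ∧ ‖J‖ ≤ C * |b - a| := by
  refine ⟨LinearMap.mkContinuous
    { toFun := fun x => ∫ r in a..b, f r x
      map_add' := fun x y => by
        rw [← intervalIntegral.integral_add (hint x) (hint y)]; simp
      map_smul' := fun c x => by
        rw [← intervalIntegral.integral_smul]; simp }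
    (C * |b - a|) (fun x => ?_), fun x => rfl, ?_⟩
  · calc ‖∫ r in a..b, f r x‖ ≤ C * ‖x‖ * |b - a| := by
          apply intervalIntegral.norm_integral_le_of_norm_le_const
          intro r hr
          exact le_trans ((f r).le_opNorm x)
            (mul_le_mul_of_nonneg_right (hb r (Set.uIoc_subset_uIcc hr)) (norm_nonneg x))
      _ = C * |b - a| * ‖x‖ := by ring
  · apply LinearMap.mkContinuous_norm_le _ (by positivity)

end Aux


open MeasureTheory intervalIntegral Set Filter Topology

/-- Fubini on the triangle `a ≤ σ ≤ r ≤ b` for separately-continuous bounded integrands. -/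
lemma aux_fubini_triangle {E : Type*} [NormedAddCommGroup E] [NormedSpace ℝ E] [CompleteSpace E]
    (a b : ℝ) (hab : a ≤ b) (g : ℝ → ℝ → E)
    (hc : ∀ r, Continuous fun σ => g σ r)
    (hm : ∀ σ, Continuous fun r => g σ r)
    (C : ℝ) (hC : ∀ σ r, ‖g σ r‖ ≤ C) :
    (∫ r in a..b, ∫ σ in a..r, g σ r) = ∫ σ in a..b, ∫ r in σ..b, g σ r := by
  set μ : Measure ℝ := volume.restrict (Set.Ioc a b) with hμ
  have hfin : IsFiniteMeasure μ := by
    constructor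
    rw [hμ, Measure.restrict_apply_univ, Real.volume_Ioc]
    exact ENNReal.ofReal_lt_top
  have hsm : StronglyMeasurable (Function.uncurry g) :=
    stronglyMeasurable_uncurry_of_continuous_of_stronglyMeasurable hc
      (fun σ => (hm σ).stronglyMeasurable)
  set h : ℝ × ℝ → E := Set.indicator {p : ℝ × ℝ | p.1 ≤ p.2} (Function.uncurry g) with hh
  have hmeas : StronglyMeasurable h :=
    hsm.indicator (measurableSet_le measurable_fst measurable_snd)
  have hint : Integrable h (μ.prod μ) := by
    refine Integrable.mono' (integrable_const (max C 0)) hmeas.aestronglyMeasurable ?_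
    filter_upwards with p
    rw [hh]
    by_cases hp : p ∈ {p : ℝ × ℝ | p.1 ≤ p.2}
    · rw [Set.indicator_of_mem hp]
      exact le_trans (hC p.1 p.2) (le_max_left _ _)
    · rw [Set.indicator_of_notMem hp]
      simp [le_max_right C 0]
  have hmem : ∀ᵐ z ∂μ, z ∈ Set.Ioc a b := ae_restrict_mem measurableSet_Ioc
  have key : ∫ r, (∫ σ, h (σ, r) ∂μ) ∂μ = ∫ σ, (∫ r, h (σ, r) ∂μ) ∂μ := by
    exact (integral_integral_swap (f := fun r σ => h (σ, r)) hint.swap)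
  calc (∫ r in a..b, ∫ σ in a..r, g σ r)
      = ∫ r, (∫ σ in a..r, g σ r) ∂μ := intervalIntegral.integral_of_le hab
    _ = ∫ r, (∫ σ, h (σ, r) ∂μ) ∂μ := by
        refine integral_congr_ae ?_
        filter_upwards [hmem] with r hr
        have h1 : (fun σ => h (σ, r)) = Set.indicator (Set.Iic r) (fun σ => g σ r) := by
          funext σ
          rw [hh]
          by_cases hσ : σ ≤ r
          · rw [Set.indicator_of_mem (by exact hσ), Set.indicator_of_mem (by exact hσ)]
            rfl
          · rw [Set.indicator_of_notMem (by exact hσ), Set.indicator_of_notMem (by exact hσ)]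
        rw [h1, MeasureTheory.integral_indicator measurableSet_Iic, hμ,
          Measure.restrict_restrict measurableSet_Iic]
        have h2 : Set.Iic r ∩ Set.Ioc a b = Set.Ioc a r := by
          ext σ
          simp only [Set.mem_inter_iff, Set.mem_Iic, Set.mem_Ioc]
          exact ⟨fun ⟨h3, h4, _⟩ => ⟨h4, h3⟩, fun ⟨h3, h4⟩ => ⟨h4, h3, le_trans h4 hr.2⟩⟩
        rw [h2, ← intervalIntegral.integral_of_le (le_of_lt hr.1)]
    _ = ∫ σ, (∫ r, h (σ, r) ∂μ) ∂μ := key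
    _ = ∫ σ, (∫ r in σ..b, g σ r) ∂μ := by
        refine integral_congr_ae ?_
        filter_upwards [hmem] with σ hσ
        have h1 : (fun r => h (σ, r)) = Set.indicator (Set.Ici σ) (fun r => g σ r) := by
          funext r
          rw [hh]
          by_cases hr : σ ≤ r
          · rw [Set.indicator_of_mem (by exact hr), Set.indicator_of_mem (by exact hr)]
            rfl
          · rw [Set.indicator_of_notMem (by exact hr), Set.indicator_of_notMem (by exact hr)]
        rw [h1, MeasureTheory.integral_indicator measurableSet_Ici, hμ,
          Measure.restrict_restrict measurableSet_Ici]
        have h2 : Set.Ici σ ∩ Set.Ioc a b = Set.Icc σ b := by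
          ext r
          simp only [Set.mem_inter_iff, Set.mem_Ici, Set.mem_Ioc, Set.mem_Icc]
          exact ⟨fun ⟨h3, _, h5⟩ => ⟨h3, h5⟩, fun ⟨h3, h4⟩ => ⟨h3, lt_of_lt_of_le hσ.1 h3, h4⟩⟩
        rw [h2, integral_Icc_eq_integral_Ioc, ← intervalIntegral.integral_of_le hσ.2]
    _ = ∫ σ in a..b, ∫ r in σ..b, g σ r := (intervalIntegral.integral_of_le hab).symm


open MeasureTheory intervalIntegral Set Filter Topology

/-- Gronwall-type vanishing lemma via iteration. -/
lemma aux_gronwall {E : Type*} [NormedAddCommGroup E]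
    (t T C : ℝ) (htT : t ≤ T) (hC : 0 ≤ C) (y : ℝ → E)
    (hcont : ContinuousOn (fun s => ‖y s‖) (Set.Icc t T))
    (hineq : ∀ s ∈ Set.Icc t T, ‖y s‖ ≤ C * ∫ r in s..T, ‖y r‖) :
    ∀ s ∈ Set.Icc t T, y s = 0 := by
  obtain ⟨My, hMy⟩ := isCompact_Icc.exists_bound_of_continuousOn hcont
  have hMy' : ∀ s ∈ Set.Icc t T, ‖y s‖ ≤ max My 0 := fun s hs => by
    calc ‖y s‖ = ‖‖y s‖‖ := (norm_norm _).symm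
    _ ≤ My := hMy s hs
    _ ≤ max My 0 := le_max_left _ _
  set M := max My 0 with hM
  have hM0 : 0 ≤ M := le_max_right _ _
  have hyint : ∀ s ∈ Set.Icc t T, IntervalIntegrable (fun r => ‖y r‖) volume s T := by
    intro s hs
    apply ContinuousOn.intervalIntegrable
    rw [Set.uIcc_of_le hs.2]
    exact hcont.mono (Set.Icc_subset_Icc_left hs.1)
  have key : ∀ n : ℕ, ∀ s ∈ Set.Icc t T, ‖y s‖ ≤ M * (C * (T - s)) ^ n / n.factorial := by
    intro n
    induction n with
    | zero => intro s hs; simpa using hMy' s hs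
    | succ n ih =>
      intro s hs
      have hint2 : IntervalIntegrable (fun r => M * (C * (T - r)) ^ n / n.factorial)
          volume s T := by
        apply ContinuousOn.intervalIntegrable
        fun_prop
      calc ‖y s‖ ≤ C * ∫ r in s..T, ‖y r‖ := hineq s hs
        _ ≤ C * ∫ r in s..T, M * (C * (T - r)) ^ n / n.factorial := by
            apply mul_le_mul_of_nonneg_left _ hC
            apply intervalIntegral.integral_mono_on hs.2 (hyint s hs) hint2
            intro r hr
            exact ih r ⟨le_trans hs.1 hr.1, hr.2⟩
        _ = M * (C * (T - s)) ^ (n + 1) / (n + 1).factorial := by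
            have h1 : (∫ r in s..T, M * (C * (T - r)) ^ n / n.factorial)
                = (M * C ^ n / n.factorial) * ∫ r in s..T, (T - r) ^ n := by
              rw [← intervalIntegral.integral_const_mul]
              simp only [mul_pow]; congr 1; funext r; ring
            have h2 : (∫ r in s..T, (T - r) ^ n) = (T - s) ^ (n + 1) / (n + 1) := by
              rw [intervalIntegral.integral_comp_sub_left (fun u => u ^ n) T]
              simp [integral_pow]
            rw [h1, h2, Nat.factorial_succ]
            simp only [mul_pow]
            push_cast
            field_simp
            ring
  intro s hs
  have hten : Tendsto (fun n : ℕ => M * (C * (T - s)) ^ n / n.factorial) atTop (𝓝 0) := by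
    have := FloorSemiring.tendsto_pow_div_factorial_atTop (K := ℝ) (C * (T - s))
    have h2 := this.const_mul M
    simpa [mul_div_assoc] using h2
  have : ‖y s‖ ≤ 0 := ge_of_tendsto hten (Filter.Eventually.of_forall (fun n => key n s hs))
  simpa using le_antisymm this (norm_nonneg _)

/-- Continuity of `t ↦ ∫_t^T Ωb t r (W r (Ul r t x))` on `[0,T]`. -/
lemma aux_hard_cont {X₁ X₂ : Type*}
    [NormedAddCommGroup X₁] [NormedSpace ℝ X₁]
    [NormedAddCommGroup X₂] [NormedSpace ℝ X₂] [CompleteSpace X₂]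
    (T : ℝ) (hT : 0 ≤ T)
    (Ul : ℝ → ℝ → X₁ →L[ℝ] X₁)
    (hUlid : ∀ s ∈ Set.Icc 0 T, Ul s s = ContinuousLinearMap.id ℝ X₁)
    (hUlcomp : ∀ s r t : ℝ, 0 ≤ s → s ≤ r → r ≤ t → t ≤ T →
      Ul t s = (Ul t r).comp (Ul r s))
    (MUl : ℝ) (hUlbdd : ∀ s t : ℝ, 0 ≤ s → s ≤ t → t ≤ T → ‖Ul t s‖ ≤ MUl)
    (hUlsc₁ : ∀ x : X₁, ∀ s ∈ Set.Icc 0 T, ContinuousOn (fun t => Ul t s x) (Set.Icc s T))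
    (hUlsc₂ : ∀ x : X₁, ∀ t ∈ Set.Icc 0 T, ContinuousOn (fun s => Ul t s x) (Set.Icc 0 t))
    (Ωb : ℝ → ℝ → X₂ →L[ℝ] X₂)
    (MΩb : ℝ) (hΩbbdd : ∀ t s : ℝ, 0 ≤ t → t ≤ s → s ≤ T → ‖Ωb t s‖ ≤ MΩb)
    (hΩbsc₁ : ∀ y : X₂, ∀ s ∈ Set.Icc 0 T, ContinuousOn (fun t => Ωb t s y) (Set.Icc 0 s))
    (hΩbsc₂ : ∀ y : X₂, ∀ t ∈ Set.Icc 0 T, ContinuousOn (fun s => Ωb t s y) (Set.Icc t T))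
    (W : ℝ → X₁ →L[ℝ] X₂) (MW : ℝ)
    (hWbdd : ∀ r ∈ Set.Icc 0 T, ‖W r‖ ≤ MW)
    (hWsc : ∀ x : X₁, ContinuousOn (fun r => W r x) (Set.Icc 0 T))
    (x : X₁) :
    ContinuousOn (fun t => ∫ r in t..T, Ωb t r (W r (Ul r t x))) (Set.Icc 0 T) := by
  have hMΩb0 : 0 ≤ MΩb := le_trans (norm_nonneg _) (hΩbbdd 0 0 le_rfl le_rfl hT)
  have hMUl0 : 0 ≤ MUl := le_trans (norm_nonneg _) (hUlbdd 0 0 le_rfl le_rfl hT)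
  have hMW0 : 0 ≤ MW := le_trans (norm_nonneg _) (hWbdd 0 ⟨le_rfl, hT⟩)
  set CK : ℝ := MΩb * (MW * MUl) with hCK
  have hCK0 : 0 ≤ CK := by positivity
  have hfb : ∀ (a u r : ℝ) (z : X₁), 0 ≤ a → a ≤ r → r ≤ T → 0 ≤ u → u ≤ r →
      ‖Ωb a r (W r (Ul r u z))‖ ≤ CK * ‖z‖ := by
    intro a u r z ha har hrT hu hur
    have h1 : ‖Ul r u z‖ ≤ MUl * ‖z‖ := (Ul r u).le_of_opNorm_le (hUlbdd u r hu hur hrT) z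
    have h2 : ‖W r (Ul r u z)‖ ≤ MW * (MUl * ‖z‖) :=
      le_trans ((W r).le_opNorm _) (mul_le_mul (hWbdd r ⟨le_trans hu hur, hrT⟩) h1
        (norm_nonneg _) hMW0)
    calc ‖Ωb a r (W r (Ul r u z))‖ ≤ MΩb * ‖W r (Ul r u z)‖ :=
          (Ωb a r).le_of_opNorm_le (hΩbbdd a r ha har hrT) _
      _ ≤ MΩb * (MW * (MUl * ‖z‖)) := mul_le_mul_of_nonneg_left h2 hMΩb0
      _ = CK * ‖z‖ := by rw [hCK]; ring
  have hwcont : ∀ (u : ℝ) (z : X₁), u ∈ Set.Icc 0 T →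
      ContinuousOn (fun r => W r (Ul r u z)) (Set.Icc u T) := by
    intro u z hu
    exact aux_strong_apply_cont W (Set.Icc u T) MW
      (fun r hr => hWbdd r ⟨le_trans hu.1 hr.1, hr.2⟩)
      (fun y => (hWsc y).mono (Set.Icc_subset_Icc_left hu.1))
      (hUlsc₁ z u hu)
  have hfcont : ∀ (a u : ℝ) (z : X₁), 0 ≤ a → u ∈ Set.Icc 0 T → a ≤ T →
      ContinuousOn (fun r => Ωb a r (W r (Ul r u z))) (Set.Icc (max a u) T) := by
    intro a u z ha huT haT
    exact aux_strong_apply_cont (fun r => Ωb a r) _ MΩb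
      (fun r hr => hΩbbdd a r ha (le_trans (le_max_left a u) hr.1) hr.2)
      (fun y => (hΩbsc₂ y a ⟨ha, haT⟩).mono (Set.Icc_subset_Icc_left (le_max_left a u)))
      ((hwcont u z huT).mono (Set.Icc_subset_Icc_left (le_max_right a u)))
  intro t₀ ht₀
  set l := 𝓝[Set.Icc (0:ℝ) T] t₀ with hl
  set v : ℝ → X₂ := fun ρ => W ρ (Ul ρ t₀ x) with hv
  have hvcont : ContinuousOn v (Set.Icc t₀ T) := hwcont t₀ x ht₀
  obtain ⟨Cv0, hCv0⟩ := isCompact_Icc.exists_bound_of_continuousOn hvcont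
  set Cv : ℝ := max Cv0 0 with hCvdef
  have hCv : ∀ ρ ∈ Set.Icc t₀ T, ‖v ρ‖ ≤ Cv := fun ρ hρ =>
    le_trans (hCv0 ρ hρ) (le_max_left _ _)
  set e : ℝ → ℝ := fun t => ‖Ul (max t t₀) t x - Ul (max t t₀) t₀ x‖ with he
  -- difference path continuity
  have hdiffcont : ∀ t ∈ Set.Icc (0:ℝ) T,
      ContinuousOn (fun u => Ωb t u (v u) - Ωb t₀ u (v u)) (Set.Icc (max t t₀) T) := by
    intro t ht
    apply ContinuousOn.sub
    · exact aux_strong_apply_cont (fun u => Ωb t u) _ MΩb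
        (fun u hu => hΩbbdd t u ht.1 (le_trans (le_max_left t t₀) hu.1) hu.2)
        (fun y => (hΩbsc₂ y t ht).mono (Set.Icc_subset_Icc_left (le_max_left t t₀)))
        (hvcont.mono (Set.Icc_subset_Icc_left (le_max_right t t₀)))
    · exact aux_strong_apply_cont (fun u => Ωb t₀ u) _ MΩb
        (fun u hu => hΩbbdd t₀ u ht₀.1 (le_trans (le_max_right t t₀) hu.1) hu.2)
        (fun y => (hΩbsc₂ y t₀ ht₀).mono (Set.Icc_subset_Icc_left (le_max_right t t₀)))
        (hvcont.mono (Set.Icc_subset_Icc_left (le_max_right t t₀)))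
  set ρf : ℝ → ℝ → ℝ := fun t r =>
    ‖Ωb t (max r (max t t₀)) (v (max r (max t t₀))) -
      Ωb t₀ (max r (max t t₀)) (v (max r (max t t₀)))‖ with hρf
  set D : ℝ → ℝ := fun t => ∫ r in t₀..T, ρf t r with hD
  have hρfcont : ∀ t ∈ Set.Icc (0:ℝ) T, ContinuousOn (ρf t) (Set.Icc t₀ T) := by
    intro t ht
    have hmT : max t t₀ ≤ T := max_le ht.2 ht₀.2
    have hmax : Continuous (fun r : ℝ => max r (max t t₀)) :=
      continuous_id.max continuous_const
    have hmapsto : Set.MapsTo (fun r : ℝ => max r (max t t₀)) (Set.Icc t₀ T)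
        (Set.Icc (max t t₀) T) := fun r hr => ⟨le_max_right _ _, max_le hr.2 hmT⟩
    exact (((hdiffcont t ht).comp hmax.continuousOn hmapsto)).norm
  have hD0 : Tendsto D l (𝓝 0) := by
    have h0 : (0:ℝ) = ∫ r in t₀..T, (0:ℝ) := by simp
    rw [hD, h0]
    apply intervalIntegral.tendsto_integral_filter_of_dominated_convergence
      (bound := fun _ => 2 * (MΩb * Cv))
    · filter_upwards [self_mem_nhdsWithin] with t ht
      apply ContinuousOn.aestronglyMeasurable _ measurableSet_uIoc
      apply (hρfcont t ht).mono
      rw [Set.uIoc_of_le ht₀.2]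
      exact Set.Ioc_subset_Icc_self
    · filter_upwards [self_mem_nhdsWithin] with t ht
      filter_upwards with r hr
      rw [Set.uIoc_of_le ht₀.2] at hr
      have hu1 : t ≤ max r (max t t₀) := le_trans (le_max_left t t₀) (le_max_right _ _)
      have hu2 : t₀ ≤ max r (max t t₀) := le_trans (le_max_right t t₀) (le_max_right _ _)
      have hu3 : max r (max t t₀) ≤ T := max_le hr.2 (max_le ht.2 ht₀.2)
      have hb1 : ‖Ωb t (max r (max t t₀)) (v (max r (max t t₀)))‖ ≤ MΩb * Cv :=
        le_trans ((Ωb _ _).le_of_opNorm_le (hΩbbdd t _ ht.1 hu1 hu3) _)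
          (mul_le_mul_of_nonneg_left (hCv _ ⟨hu2, hu3⟩) hMΩb0)
      have hb2 : ‖Ωb t₀ (max r (max t t₀)) (v (max r (max t t₀)))‖ ≤ MΩb * Cv :=
        le_trans ((Ωb _ _).le_of_opNorm_le (hΩbbdd t₀ _ ht₀.1 hu2 hu3) _)
          (mul_le_mul_of_nonneg_left (hCv _ ⟨hu2, hu3⟩) hMΩb0)
      have hnn : (0:ℝ) ≤ ρf t r := by simp only [hρf]; exact norm_nonneg _
      rw [Real.norm_of_nonneg hnn]
      calc ρf t r ≤ ‖Ωb t (max r (max t t₀)) (v (max r (max t t₀)))‖ +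
            ‖Ωb t₀ (max r (max t t₀)) (v (max r (max t t₀)))‖ := norm_sub_le _ _
        _ ≤ 2 * (MΩb * Cv) := by linarith
    · exact intervalIntegrable_const
    · filter_upwards with r
      intro hr
      rw [Set.uIoc_of_le ht₀.2] at hr
      have h1 : Tendsto (fun t => Ωb t r (v r)) l (𝓝 (Ωb t₀ r (v r))) := by
        have hcw : Tendsto (fun t => Ωb t r (v r)) (𝓝[Set.Icc 0 r] t₀) (𝓝 (Ωb t₀ r (v r))) :=
          hΩbsc₁ (v r) r ⟨le_trans ht₀.1 hr.1.le, hr.2⟩ t₀ ⟨ht₀.1, hr.1.le⟩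
        apply hcw.mono_left
        rw [hl, nhdsWithin_restrict' (Set.Icc 0 T) (Iio_mem_nhds hr.1)]
        exact nhdsWithin_mono _ (fun z hz => ⟨hz.1.1, le_of_lt hz.2⟩)
      have h3 : Tendsto (fun t => ‖Ωb t r (v r) - Ωb t₀ r (v r)‖) l (𝓝 0) := by
        simpa using (h1.sub (tendsto_const_nhds (x := Ωb t₀ r (v r)))).norm
      apply h3.congr'
      have hIio : Set.Iio r ∈ l := nhdsWithin_le_nhds (Iio_mem_nhds hr.1)
      filter_upwards [hIio] with t ht
      have hmax : max r (max t t₀) = r :=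
        max_eq_left (max_le (le_of_lt ht) hr.1.le)
      rw [hρf]
      simp only [hmax]
  have he0 : Tendsto e l (𝓝 0) := by
    have hsub : Set.Icc (0:ℝ) T ⊆ Set.Icc 0 t₀ ∪ Set.Icc t₀ T := by
      intro z hz
      rcases le_total z t₀ with h | h
      · exact Or.inl ⟨hz.1, h⟩
      · exact Or.inr ⟨h, hz.2⟩
    have hle : l ≤ 𝓝[Set.Icc 0 t₀] t₀ ⊔ 𝓝[Set.Icc t₀ T] t₀ := by
      rw [← nhdsWithin_union]; exact nhdsWithin_mono _ hsub
    apply Tendsto.mono_left _ hle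
    rw [tendsto_sup]
    constructor
    · have hbase : Tendsto (fun t => Ul t₀ t x) (𝓝[Set.Icc 0 t₀] t₀) (𝓝 (Ul t₀ t₀ x)) :=
        hUlsc₂ x t₀ ht₀ t₀ ⟨ht₀.1, le_rfl⟩
      have h3 : Tendsto (fun t => ‖Ul t₀ t x - Ul t₀ t₀ x‖) (𝓝[Set.Icc 0 t₀] t₀) (𝓝 0) := by
        simpa using (hbase.sub (tendsto_const_nhds (x := Ul t₀ t₀ x))).norm
      apply h3.congr'
      filter_upwards [self_mem_nhdsWithin] with t ht
      rw [he]
      simp only [max_eq_right ht.2]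
    · have hbase : Tendsto (fun t => Ul t t₀ x) (𝓝[Set.Icc t₀ T] t₀) (𝓝 (Ul t₀ t₀ x)) :=
        hUlsc₁ x t₀ ht₀ t₀ ⟨le_rfl, ht₀.2⟩
      have hid : Ul t₀ t₀ x = x := by rw [hUlid t₀ ht₀]; rfl
      have h3 : Tendsto (fun t => ‖Ul t t₀ x - Ul t₀ t₀ x‖) (𝓝[Set.Icc t₀ T] t₀) (𝓝 0) := by
        simpa using (hbase.sub (tendsto_const_nhds (x := Ul t₀ t₀ x))).norm
      apply h3.congr'
      filter_upwards [self_mem_nhdsWithin] with t ht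
      have hidt : Ul t t x = x := by
        rw [hUlid t ⟨le_trans ht₀.1 ht.1, ht.2⟩]; rfl
      rw [he]
      simp only [max_eq_left ht.1, hidt, hid]
      rw [norm_sub_rev]
  have hΦ : Tendsto (fun t => CK * ‖x‖ * |t - t₀| + CK * T * e t + D t) l (𝓝 0) := by
    have h1 : Tendsto (fun t : ℝ => |t - t₀|) l (𝓝 0) := by
      have hc : Continuous (fun t : ℝ => |t - t₀|) :=
        (continuous_id.sub continuous_const).abs
      have := hc.tendsto t₀
      simp only [sub_self, abs_zero] at this
      exact this.mono_left nhdsWithin_le_nhds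
    have := ((h1.const_mul (CK * ‖x‖)).add (he0.const_mul (CK * T))).add hD0
    simpa using this
  have key : Tendsto (fun t => (∫ r in t..T, Ωb t r (W r (Ul r t x))) -
      ∫ r in t₀..T, Ωb t₀ r (W r (Ul r t₀ x))) l (𝓝 0) := by
    apply squeeze_zero_norm' _ hΦ
    filter_upwards [self_mem_nhdsWithin] with t ht
    have hm0 : 0 ≤ max t t₀ := le_trans ht.1 (le_max_left _ _)
    have hmT : max t t₀ ≤ T := max_le ht.2 ht₀.2
    have htm : t ≤ max t t₀ := le_max_left _ _
    have ht₀m : t₀ ≤ max t t₀ := le_max_right _ _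
    have hI1 : IntervalIntegrable (fun r => Ωb t r (W r (Ul r t x))) volume t (max t t₀) := by
      apply ContinuousOn.intervalIntegrable
      rw [Set.uIcc_of_le htm]
      apply (hfcont t t x ht.1 ht ht.2).mono
      simp only [max_self]
      exact Set.Icc_subset_Icc_right hmT
    have hI2 : IntervalIntegrable (fun r => Ωb t r (W r (Ul r t x))) volume (max t t₀) T := by
      apply ContinuousOn.intervalIntegrable
      rw [Set.uIcc_of_le hmT]
      apply (hfcont t t x ht.1 ht ht.2).mono
      simp only [max_self]
      exact Set.Icc_subset_Icc_left htm
    have hI1₀ : IntervalIntegrable (fun r => Ωb t₀ r (W r (Ul r t₀ x))) volume t₀ (max t t₀) := by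
      apply ContinuousOn.intervalIntegrable
      rw [Set.uIcc_of_le ht₀m]
      apply (hfcont t₀ t₀ x ht₀.1 ht₀ ht₀.2).mono
      simp only [max_self]
      exact Set.Icc_subset_Icc_right hmT
    have hI2₀ : IntervalIntegrable (fun r => Ωb t₀ r (W r (Ul r t₀ x))) volume (max t t₀) T := by
      apply ContinuousOn.intervalIntegrable
      rw [Set.uIcc_of_le hmT]
      apply (hfcont t₀ t₀ x ht₀.1 ht₀ ht₀.2).mono
      simp only [max_self]
      exact Set.Icc_subset_Icc_left ht₀m
    have hIa : IntervalIntegrable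
        (fun r => Ωb t r (W r (Ul r (max t t₀) (Ul (max t t₀) t x - Ul (max t t₀) t₀ x))))
        volume (max t t₀) T := by
      apply ContinuousOn.intervalIntegrable
      rw [Set.uIcc_of_le hmT]
      apply (hfcont t (max t t₀) _ ht.1 ⟨hm0, hmT⟩ ht.2).mono
      simp only [max_eq_right htm]
      exact Set.Subset.rfl
    have hIb : IntervalIntegrable (fun r => Ωb t r (v r) - Ωb t₀ r (v r))
        volume (max t t₀) T := by
      apply ContinuousOn.intervalIntegrable
      rw [Set.uIcc_of_le hmT]
      exact hdiffcont t ht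
    have hIρ1 : IntervalIntegrable (ρf t) volume t₀ (max t t₀) := by
      apply ContinuousOn.intervalIntegrable
      rw [Set.uIcc_of_le ht₀m]
      exact (hρfcont t ht).mono (Set.Icc_subset_Icc_right hmT)
    have hIρ2 : IntervalIntegrable (ρf t) volume (max t t₀) T := by
      apply ContinuousOn.intervalIntegrable
      rw [Set.uIcc_of_le hmT]
      exact (hρfcont t ht).mono (Set.Icc_subset_Icc_left ht₀m)
    -- pointwise decomposition on [max t t₀, T]
    have hpt : ∀ r ∈ Set.Icc (max t t₀) T,
        Ωb t r (W r (Ul r t x)) - Ωb t₀ r (W r (Ul r t₀ x)) =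
        Ωb t r (W r (Ul r (max t t₀) (Ul (max t t₀) t x - Ul (max t t₀) t₀ x))) +
          (Ωb t r (v r) - Ωb t₀ r (v r)) := by
      intro r hr
      have hc1 : Ul r t = (Ul r (max t t₀)).comp (Ul (max t t₀) t) :=
        hUlcomp t (max t t₀) r ht.1 htm hr.1 hr.2
      have hc2 : Ul r t₀ = (Ul r (max t t₀)).comp (Ul (max t t₀) t₀) :=
        hUlcomp t₀ (max t t₀) r ht₀.1 ht₀m hr.1 hr.2
      rw [hv]
      simp only [hc1, hc2, ContinuousLinearMap.coe_comp', Function.comp_apply, map_sub]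
      abel
    have heq2 : (∫ r in (max t t₀)..T, Ωb t r (W r (Ul r t x))) -
        (∫ r in (max t t₀)..T, Ωb t₀ r (W r (Ul r t₀ x))) =
        (∫ r in (max t t₀)..T,
          Ωb t r (W r (Ul r (max t t₀) (Ul (max t t₀) t x - Ul (max t t₀) t₀ x)))) +
        ∫ r in (max t t₀)..T, (Ωb t r (v r) - Ωb t₀ r (v r)) := by
      rw [← intervalIntegral.integral_sub hI2 hI2₀, ← intervalIntegral.integral_add hIa hIb]
      apply intervalIntegral.integral_congr
      intro r hr
      rw [Set.uIcc_of_le hmT] at hr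
      exact hpt r hr
    have n1 : ‖∫ r in t..(max t t₀), Ωb t r (W r (Ul r t x))‖ ≤ CK * ‖x‖ * (max t t₀ - t) := by
      have h1 := intervalIntegral.norm_integral_le_of_norm_le_const (C := CK * ‖x‖)
        (a := t) (b := max t t₀) (f := fun r => Ωb t r (W r (Ul r t x))) (fun r hr => by
          rw [Set.uIoc_of_le htm] at hr
          exact hfb t t r x ht.1 (le_of_lt hr.1) (le_trans hr.2 hmT) ht.1 (le_of_lt hr.1))
      rwa [abs_of_nonneg (sub_nonneg.2 htm)] at h1
    have n2 : ‖∫ r in t₀..(max t t₀), Ωb t₀ r (W r (Ul r t₀ x))‖ ≤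
        CK * ‖x‖ * (max t t₀ - t₀) := by
      have h1 := intervalIntegral.norm_integral_le_of_norm_le_const (C := CK * ‖x‖)
        (a := t₀) (b := max t t₀) (f := fun r => Ωb t₀ r (W r (Ul r t₀ x))) (fun r hr => by
          rw [Set.uIoc_of_le ht₀m] at hr
          exact hfb t₀ t₀ r x ht₀.1 (le_of_lt hr.1) (le_trans hr.2 hmT) ht₀.1 (le_of_lt hr.1))
      rwa [abs_of_nonneg (sub_nonneg.2 ht₀m)] at h1
    have n3 : ‖∫ r in (max t t₀)..T,
        Ωb t r (W r (Ul r (max t t₀) (Ul (max t t₀) t x - Ul (max t t₀) t₀ x)))‖ ≤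
        CK * T * e t := by
      have h1 := intervalIntegral.norm_integral_le_of_norm_le_const (C := CK * (e t))
        (a := max t t₀) (b := T)
        (f := fun r => Ωb t r (W r (Ul r (max t t₀) (Ul (max t t₀) t x - Ul (max t t₀) t₀ x))))
        (fun r hr => by
          rw [Set.uIoc_of_le hmT] at hr
          exact hfb t (max t t₀) r _ ht.1 (le_trans htm (le_of_lt hr.1)) hr.2 hm0
            (le_of_lt hr.1))
      rw [abs_of_nonneg (sub_nonneg.2 hmT)] at h1
      calc ‖_‖ ≤ CK * e t * (T - max t t₀) := h1
        _ ≤ CK * T * e t := by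
          have he0' : 0 ≤ e t := norm_nonneg _
          nlinarith [mul_nonneg hCK0 he0']
    have n4 : ‖∫ r in (max t t₀)..T, (Ωb t r (v r) - Ωb t₀ r (v r))‖ ≤ D t := by
      calc ‖∫ r in (max t t₀)..T, (Ωb t r (v r) - Ωb t₀ r (v r))‖
          ≤ ∫ r in (max t t₀)..T, ‖Ωb t r (v r) - Ωb t₀ r (v r)‖ :=
            intervalIntegral.norm_integral_le_integral_norm hmT
        _ = ∫ r in (max t t₀)..T, ρf t r := by
            apply intervalIntegral.integral_congr
            intro r hr
            rw [Set.uIcc_of_le hmT] at hr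
            rw [hρf]
            simp only [max_eq_left hr.1]
        _ ≤ D t := by
            show (∫ r in (max t t₀)..T, ρf t r) ≤ ∫ r in t₀..T, ρf t r
            rw [← intervalIntegral.integral_add_adjacent_intervals hIρ1 hIρ2]
            have : 0 ≤ ∫ r in t₀..(max t t₀), ρf t r :=
              intervalIntegral.integral_nonneg ht₀m (fun u hu => norm_nonneg _)
            linarith
    have hsplit : (∫ r in t..T, Ωb t r (W r (Ul r t x))) -
        (∫ r in t₀..T, Ωb t₀ r (W r (Ul r t₀ x))) =
        ((∫ r in t..(max t t₀), Ωb t r (W r (Ul r t x))) -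
          (∫ r in t₀..(max t t₀), Ωb t₀ r (W r (Ul r t₀ x)))) +
        ((∫ r in (max t t₀)..T, Ωb t r (W r (Ul r t x))) -
          (∫ r in (max t t₀)..T, Ωb t₀ r (W r (Ul r t₀ x)))) := by
      rw [← intervalIntegral.integral_add_adjacent_intervals hI1 hI2,
        ← intervalIntegral.integral_add_adjacent_intervals hI1₀ hI2₀]
      abel
    have hlen : (max t t₀ - t) + (max t t₀ - t₀) = |t - t₀| := by
      rcases le_total t t₀ with h | h
      · rw [max_eq_right h, abs_of_nonpos (by linarith)]; ring
      · rw [max_eq_left h, abs_of_nonneg (by linarith)]; ring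
    calc ‖(∫ r in t..T, Ωb t r (W r (Ul r t x))) -
        ∫ r in t₀..T, Ωb t₀ r (W r (Ul r t₀ x))‖
        ≤ ‖(∫ r in t..(max t t₀), Ωb t r (W r (Ul r t x))) -
            (∫ r in t₀..(max t t₀), Ωb t₀ r (W r (Ul r t₀ x)))‖ +
          ‖(∫ r in (max t t₀)..T, Ωb t r (W r (Ul r t x))) -
            (∫ r in (max t t₀)..T, Ωb t₀ r (W r (Ul r t₀ x)))‖ := by
          rw [hsplit]; exact norm_add_le _ _
      _ ≤ (‖∫ r in t..(max t t₀), Ωb t r (W r (Ul r t x))‖ +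
            ‖∫ r in t₀..(max t t₀), Ωb t₀ r (W r (Ul r t₀ x))‖) +
          (‖∫ r in (max t t₀)..T,
              Ωb t r (W r (Ul r (max t t₀) (Ul (max t t₀) t x - Ul (max t t₀) t₀ x)))‖ +
            ‖∫ r in (max t t₀)..T, (Ωb t r (v r) - Ωb t₀ r (v r))‖) := by
          apply add_le_add (norm_sub_le _ _)
          rw [heq2]; exact norm_add_le _ _
      _ ≤ CK * ‖x‖ * |t - t₀| + CK * T * e t + D t := by
          have h9 : CK * ‖x‖ * (max t t₀ - t) + CK * ‖x‖ * (max t t₀ - t₀) =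
              CK * ‖x‖ * |t - t₀| := by rw [← hlen]; ring
          linarith
  have hF : Tendsto (fun t => ∫ r in t..T, Ωb t r (W r (Ul r t x))) l
      (𝓝 (∫ r in t₀..T, Ωb t₀ r (W r (Ul r t₀ x)))) := by
    rwa [← tendsto_sub_nhds_zero_iff]
  exact hF

/-- representation of the unique strongly continuous solution of the
linear integral equation `P(t) = U⃗_{t,T} G U⃖_{T,t} + ∫_t^T U⃗_{t,r}[Q₁₂(r) − Q₂(r)P(r)]U⃖_{r,t} dr`
via the perturbed backward family `Ω⃗`. -/
theorem linear_integral_equation_unique_solution_right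
    {X₁ X₂ : Type*}
    [NormedAddCommGroup X₁] [NormedSpace ℝ X₁] [CompleteSpace X₁]
    [NormedAddCommGroup X₂] [NormedSpace ℝ X₂] [CompleteSpace X₂]
    (T : ℝ) (hT : 0 ≤ T)
    -- forward evolution family in L(X₁): strongly continuous, uniformly bounded
    (Ul : ℝ → ℝ → X₁ →L[ℝ] X₁)
    (hUlid : ∀ s ∈ Set.Icc 0 T, Ul s s = ContinuousLinearMap.id ℝ X₁)
    (hUlcomp : ∀ s r t : ℝ, 0 ≤ s → s ≤ r → r ≤ t → t ≤ T →
      Ul t s = (Ul t r).comp (Ul r s))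
    (MUl : ℝ) (hUlbdd : ∀ s t : ℝ, 0 ≤ s → s ≤ t → t ≤ T → ‖Ul t s‖ ≤ MUl)
    (hUlsc₁ : ∀ x : X₁, ∀ s ∈ Set.Icc 0 T, ContinuousOn (fun t => Ul t s x) (Set.Icc s T))
    (hUlsc₂ : ∀ x : X₁, ∀ t ∈ Set.Icc 0 T, ContinuousOn (fun s => Ul t s x) (Set.Icc 0 t))
    -- backward evolution family in L(X₂): strongly continuous, uniformly bounded
    (Ub : ℝ → ℝ → X₂ →L[ℝ] X₂)
    (hUbid : ∀ s ∈ Set.Icc 0 T, Ub s s = ContinuousLinearMap.id ℝ X₂)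
    (hUbcomp : ∀ t r s : ℝ, 0 ≤ t → t ≤ r → r ≤ s → s ≤ T →
      Ub t s = (Ub t r).comp (Ub r s))
    (MUb : ℝ) (hUbbdd : ∀ t s : ℝ, 0 ≤ t → t ≤ s → s ≤ T → ‖Ub t s‖ ≤ MUb)
    (hUbsc₁ : ∀ y : X₂, ∀ s ∈ Set.Icc 0 T, ContinuousOn (fun t => Ub t s y) (Set.Icc 0 s))
    (hUbsc₂ : ∀ y : X₂, ∀ t ∈ Set.Icc 0 T, ContinuousOn (fun s => Ub t s y) (Set.Icc t T))
    -- strongly continuous coefficients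
    (Q12 : ℝ → X₁ →L[ℝ] X₂)
    (hQ12sc : ∀ x : X₁, ContinuousOn (fun t => Q12 t x) (Set.Icc 0 T))
    (Q2 : ℝ → X₂ →L[ℝ] X₂)
    (hQ2sc : ∀ y : X₂, ContinuousOn (fun t => Q2 t y) (Set.Icc 0 T))
    -- the perturbed backward evolution family Ω⃗
    (Ωb : ℝ → ℝ → X₂ →L[ℝ] X₂)
    (hΩbid : ∀ s ∈ Set.Icc 0 T, Ωb s s = ContinuousLinearMap.id ℝ X₂)
    (hΩbcomp : ∀ t r s : ℝ, 0 ≤ t → t ≤ r → r ≤ s → s ≤ T →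
      Ωb t s = (Ωb t r).comp (Ωb r s))
    (MΩb : ℝ) (hΩbbdd : ∀ t s : ℝ, 0 ≤ t → t ≤ s → s ≤ T → ‖Ωb t s‖ ≤ MΩb)
    (hΩbsc₁ : ∀ y : X₂, ∀ s ∈ Set.Icc 0 T, ContinuousOn (fun t => Ωb t s y) (Set.Icc 0 s))
    (hΩbsc₂ : ∀ y : X₂, ∀ t ∈ Set.Icc 0 T, ContinuousOn (fun s => Ωb t s y) (Set.Icc t T))
    (hΩbeq : ∀ y : X₂, ∀ t s : ℝ, 0 ≤ t → t ≤ s → s ≤ T →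
      Ωb t s y = Ub t s y - ∫ r in t..s, Ub t r (Q2 r (Ωb r s y)))
    (G : X₁ →L[ℝ] X₂) :
    ∃ P : ℝ → X₁ →L[ℝ] X₂,
      (∀ x : X₁, ContinuousOn (fun t => P t x) (Set.Icc 0 T)) ∧
      -- P is given by the representation formula
      (∀ t ∈ Set.Icc 0 T, ∀ x : X₁,
        P t x = Ωb t T (G (Ul T t x)) + ∫ r in t..T, Ωb t r (Q12 r (Ul r t x))) ∧
      -- P solves the linear integral equation
      (∀ t ∈ Set.Icc 0 T, ∀ x : X₁,
        P t x = Ub t T (G (Ul T t x)) +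
          ∫ r in t..T, Ub t r (Q12 r (Ul r t x) - Q2 r (P r (Ul r t x)))) ∧
      -- and it is the unique strongly continuous solution
      (∀ Q : ℝ → X₁ →L[ℝ] X₂,
        (∀ x : X₁, ContinuousOn (fun t => Q t x) (Set.Icc 0 T)) →
        (∀ t ∈ Set.Icc 0 T, ∀ x : X₁,
          Q t x = Ub t T (G (Ul T t x)) +
            ∫ r in t..T, Ub t r (Q12 r (Ul r t x) - Q2 r (Q r (Ul r t x)))) →
        ∀ t ∈ Set.Icc 0 T, Q t = P t) := by
  -- nonnegativity of the bounds
  have hTmem : T ∈ Set.Icc (0:ℝ) T := ⟨hT, le_rfl⟩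
  have hMUl0 : 0 ≤ MUl := le_trans (norm_nonneg _) (hUlbdd 0 0 le_rfl le_rfl hT)
  have hMUb0 : 0 ≤ MUb := le_trans (norm_nonneg _) (hUbbdd 0 0 le_rfl le_rfl hT)
  have hMOb0 : 0 ≤ MΩb := le_trans (norm_nonneg _) (hΩbbdd 0 0 le_rfl le_rfl hT)
  -- uniform bounds on the coefficients
  obtain ⟨MQ12, hMQ12_0, hMQ12⟩ := aux_bs 0 T Q12 hQ12sc
  obtain ⟨MQ2, hMQ2_0, hMQ2⟩ := aux_bs 0 T Q2 hQ2sc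
  -- generic strong-continuity application helpers
  have hUbapply : ∀ a ∈ Set.Icc (0:ℝ) T, ∀ f : ℝ → X₂, ContinuousOn f (Set.Icc a T) →
      ContinuousOn (fun r => Ub a r (f r)) (Set.Icc a T) := fun a ha f hf =>
    aux_strong_apply_cont (fun r => Ub a r) _ MUb
      (fun r hr => hUbbdd a r ha.1 hr.1 hr.2) (fun y => hUbsc₂ y a ha) hf
  have hObapply : ∀ a ∈ Set.Icc (0:ℝ) T, ∀ f : ℝ → X₂, ContinuousOn f (Set.Icc a T) →
      ContinuousOn (fun r => Ωb a r (f r)) (Set.Icc a T) := fun a ha f hf =>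
    aux_strong_apply_cont (fun r => Ωb a r) _ MΩb
      (fun r hr => hΩbbdd a r ha.1 hr.1 hr.2) (fun y => hΩbsc₂ y a ha) hf
  have hQ2apply : ∀ a ∈ Set.Icc (0:ℝ) T, ∀ f : ℝ → X₂, ContinuousOn f (Set.Icc a T) →
      ContinuousOn (fun r => Q2 r (f r)) (Set.Icc a T) := fun a ha f hf =>
    aux_strong_apply_cont Q2 _ MQ2
      (fun r hr => hMQ2 r ⟨le_trans ha.1 hr.1, hr.2⟩)
      (fun y => (hQ2sc y).mono (Set.Icc_subset_Icc_left ha.1)) hf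
  have hQ12apply : ∀ a ∈ Set.Icc (0:ℝ) T, ∀ f : ℝ → X₁, ContinuousOn f (Set.Icc a T) →
      ContinuousOn (fun r => Q12 r (f r)) (Set.Icc a T) := fun a ha f hf =>
    aux_strong_apply_cont Q12 _ MQ12
      (fun r hr => hMQ12 r ⟨le_trans ha.1 hr.1, hr.2⟩)
      (fun y => (hQ12sc y).mono (Set.Icc_subset_Icc_left ha.1)) hf
  -- continuity of the basic path r ↦ Q12 r (Ul r u z) on [u, T]
  have hwcont : ∀ u ∈ Set.Icc (0:ℝ) T, ∀ z : X₁,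
      ContinuousOn (fun ρ => Q12 ρ (Ul ρ u z)) (Set.Icc u T) := fun u hu z =>
    hQ12apply u hu _ (hUlsc₁ z u hu)
  -- continuity of the representation integrand on [t, T]
  have hKcont : ∀ t ∈ Set.Icc (0:ℝ) T, ∀ z : X₁,
      ContinuousOn (fun r => Ωb t r (Q12 r (Ul r t z))) (Set.Icc t T) := fun t ht z =>
    hObapply t ht _ (hwcont t ht z)
  -- uniform bound for the representation integrand
  set CK : ℝ := MΩb * (MQ12 * MUl) with hCKdef
  have hCK0 : 0 ≤ CK := by positivity
  -- construct the integral part of P as a continuous linear map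
  have hJex : ∀ t : ℝ, ∃ J : X₁ →L[ℝ] X₂, t ∈ Set.Icc 0 T →
      ∀ x : X₁, J x = ∫ r in t..T, Ωb t r (Q12 r (Ul r t x)) := by
    intro t
    by_cases ht : t ∈ Set.Icc (0:ℝ) T
    · obtain ⟨J, hJ1, _⟩ := aux_clm_integral
        (fun r => ((Ωb t r).comp ((Q12 r).comp (Ul r t)))) t T CK
        (fun x => by
          apply ContinuousOn.intervalIntegrable
          rw [Set.uIcc_of_le ht.2]
          exact hKcont t ht x)
        hCK0
        (fun r hr => by
          rw [Set.uIcc_of_le ht.2] at hr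
          calc ‖(Ωb t r).comp ((Q12 r).comp (Ul r t))‖
              ≤ ‖Ωb t r‖ * ‖(Q12 r).comp (Ul r t)‖ := ContinuousLinearMap.opNorm_comp_le _ _
            _ ≤ MΩb * (MQ12 * MUl) := by
                apply mul_le_mul (hΩbbdd t r ht.1 hr.1 hr.2) _ (norm_nonneg _) hMOb0
                calc ‖(Q12 r).comp (Ul r t)‖ ≤ ‖Q12 r‖ * ‖Ul r t‖ :=
                      ContinuousLinearMap.opNorm_comp_le _ _
                  _ ≤ MQ12 * MUl := mul_le_mul (hMQ12 r ⟨le_trans ht.1 hr.1, hr.2⟩)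
                      (hUlbdd t r ht.1 hr.1 hr.2) (norm_nonneg _) hMQ12_0)
      exact ⟨J, fun _ x => hJ1 x⟩
    · exact ⟨0, fun h => absurd h ht⟩
  choose J hJ using hJex
  set P : ℝ → X₁ →L[ℝ] X₂ := fun t => ((Ωb t T).comp (G.comp (Ul T t))) + J t with hPdef
  have hPx : ∀ t ∈ Set.Icc (0:ℝ) T, ∀ x : X₁,
      P t x = Ωb t T (G (Ul T t x)) + ∫ r in t..T, Ωb t r (Q12 r (Ul r t x)) := by
    intro t ht x
    rw [hPdef]
    simp only [ContinuousLinearMap.add_apply, ContinuousLinearMap.coe_comp',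
      Function.comp_apply]
    rw [hJ t ht x]
  -- bullet 1 : strong continuity of P
  have hPcont : ∀ x : X₁, ContinuousOn (fun t => P t x) (Set.Icc 0 T) := by
    intro x
    apply ContinuousOn.congr (f := fun t =>
      Ωb t T (G (Ul T t x)) + ∫ r in t..T, Ωb t r (Q12 r (Ul r t x)))
    · apply ContinuousOn.add
      · apply aux_strong_apply_cont (fun t => Ωb t T) _ MΩb
          (fun r hr => hΩbbdd r T hr.1 hr.2 le_rfl) (fun y => hΩbsc₁ y T hTmem)
        exact G.continuous.comp_continuousOn (hUlsc₂ x T hTmem)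
      · exact aux_hard_cont T hT Ul hUlid hUlcomp MUl hUlbdd hUlsc₁ hUlsc₂ Ωb MΩb hΩbbdd
          hΩbsc₁ hΩbsc₂ Q12 MQ12 hMQ12 hQ12sc x
    · intro t ht
      exact hPx t ht x
  -- bound on P
  obtain ⟨MP, hMP0, hMP⟩ := aux_bs 0 T P hPcont
  -- continuity of s ↦ P s (Ul s t x) type paths
  have hPapply : ∀ a ∈ Set.Icc (0:ℝ) T, ∀ f : ℝ → X₁, ContinuousOn f (Set.Icc a T) →
      ContinuousOn (fun r => P r (f r)) (Set.Icc a T) := fun a ha f hf =>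
    aux_strong_apply_cont P _ MP
      (fun r hr => hMP r ⟨le_trans ha.1 hr.1, hr.2⟩)
      (fun y => (hPcont y).mono (Set.Icc_subset_Icc_left ha.1)) hf
  -- bullet 3 : P solves the integral equation
  have hPeq : ∀ t ∈ Set.Icc (0:ℝ) T, ∀ x : X₁,
      P t x = Ub t T (G (Ul T t x)) +
        ∫ r in t..T, Ub t r (Q12 r (Ul r t x) - Q2 r (P r (Ul r t x))) := by
    intro t ht x
    set GU : X₂ := G (Ul T t x) with hGU
    set w : ℝ → X₂ := fun ρ => Q12 ρ (Ul ρ t x) with hw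
    have hwc : ContinuousOn w (Set.Icc t T) := hwcont t ht x
    obtain ⟨Cw0, hCw0⟩ := isCompact_Icc.exists_bound_of_continuousOn hwc
    set Cw : ℝ := max Cw0 0 with hCwdef
    have hCw : ∀ ρ ∈ Set.Icc t T, ‖w ρ‖ ≤ Cw := fun ρ hρ =>
      le_trans (hCw0 ρ hρ) (le_max_left _ _)
    have hCwnn : 0 ≤ Cw := le_max_right _ _
    -- the inner integrand path (ρ ↦ Ωb r ρ (w ρ)) is integrable on [r, T]
    have hinner : ∀ r ∈ Set.Icc t T, IntervalIntegrable (fun ρ => Ωb r ρ (w ρ)) volume r T := by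
      intro r hr
      apply ContinuousOn.intervalIntegrable
      rw [Set.uIcc_of_le hr.2]
      exact hObapply r ⟨le_trans ht.1 hr.1, hr.2⟩ _ (hwc.mono (Set.Icc_subset_Icc_left hr.1))
    -- representation of P r (Ul r t x)
    have hPr : ∀ r ∈ Set.Icc t T, P r (Ul r t x) = Ωb r T GU + ∫ ρ in r..T, Ωb r ρ (w ρ) := by
      intro r hr
      have hr' : r ∈ Set.Icc (0:ℝ) T := ⟨le_trans ht.1 hr.1, hr.2⟩
      rw [hPx r hr' (Ul r t x)]
      have h1 : Ul T r (Ul r t x) = Ul T t x := by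
        rw [hUlcomp t r T ht.1 hr.1 hr.2 le_rfl]; rfl
      rw [h1, ← hGU]
      congr 1
      apply intervalIntegral.integral_congr
      intro ρ hρ
      rw [Set.uIcc_of_le hr.2] at hρ
      have h2 : Ul ρ r (Ul r t x) = Ul ρ t x := by
        rw [hUlcomp t r ρ ht.1 hr.1 hρ.1 hρ.2]; rfl
      simp only [h2, hw]
    -- S r : the integral part of P r (Ul r t x)
    set S : ℝ → X₂ := fun r => P r (Ul r t x) - Ωb r T GU with hS
    have hSval : ∀ r ∈ Set.Icc t T, S r = ∫ ρ in r..T, Ωb r ρ (w ρ) := by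
      intro r hr
      show P r (Ul r t x) - Ωb r T GU = _
      rw [hPr r hr]; abel
    have hScont : ContinuousOn S (Set.Icc t T) := by
      apply ContinuousOn.sub (hPapply t ht _ (hUlsc₁ x t ht))
      exact aux_strong_apply_cont (fun r => Ωb r T) _ MΩb
        (fun r hr => hΩbbdd r T (le_trans ht.1 hr.1) hr.2 le_rfl)
        (fun y => (hΩbsc₁ y T hTmem).mono
          (fun z hz => ⟨le_trans ht.1 hz.1, hz.2⟩)) continuousOn_const
    -- rewrite Ub t r (Q2 r (S r)) as an inner integral
    have hSint : ∀ r ∈ Set.Icc t T, Ub t r (Q2 r (S r)) =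
        ∫ ρ in r..T, Ub t r (Q2 r (Ωb r ρ (w ρ))) := by
      intro r hr
      rw [hSval r hr]
      have := ((Ub t r).comp (Q2 r)).intervalIntegral_comp_comm (hinner r hr)
      simp only [ContinuousLinearMap.coe_comp', Function.comp_apply] at this
      exact this.symm
    -- integrability of the three pieces
    have hIw : IntervalIntegrable (fun r => Ub t r (w r)) volume t T := by
      apply ContinuousOn.intervalIntegrable
      rw [Set.uIcc_of_le ht.2]
      exact hUbapply t ht _ hwc
    have hIq : IntervalIntegrable (fun r => Ub t r (Q2 r (Ωb r T GU))) volume t T := by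
      apply ContinuousOn.intervalIntegrable
      rw [Set.uIcc_of_le ht.2]
      apply hUbapply t ht _ (hQ2apply t ht _ _)
      exact aux_strong_apply_cont (fun r => Ωb r T) _ MΩb
        (fun r hr => hΩbbdd r T (le_trans ht.1 hr.1) hr.2 le_rfl)
        (fun y => (hΩbsc₁ y T hTmem).mono
          (fun z hz => ⟨le_trans ht.1 hz.1, hz.2⟩)) continuousOn_const
    have hIS : IntervalIntegrable (fun r => Ub t r (Q2 r (S r))) volume t T := by
      apply ContinuousOn.intervalIntegrable
      rw [Set.uIcc_of_le ht.2]
      exact hUbapply t ht _ (hQ2apply t ht _ hScont)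
    -- step 1 : expand the equation integrand
    have hstep1 : (∫ r in t..T, Ub t r (Q12 r (Ul r t x) - Q2 r (P r (Ul r t x)))) =
        ((∫ r in t..T, Ub t r (w r)) - ∫ r in t..T, Ub t r (Q2 r (Ωb r T GU))) -
          ∫ r in t..T, Ub t r (Q2 r (S r)) := by
      rw [← intervalIntegral.integral_sub hIw hIq,
        ← intervalIntegral.integral_sub (hIw.sub hIq) hIS]
      apply intervalIntegral.integral_congr
      intro r hr
      rw [Set.uIcc_of_le ht.2] at hr
      have hPS : P r (Ul r t x) = Ωb r T GU + S r := by
        show _ = Ωb r T GU + (P r (Ul r t x) - Ωb r T GU); abel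
      simp only [hPS, hw, map_add, map_sub]
      abel
    -- step 2 : the Ωb-equation term
    have hq : (∫ r in t..T, Ub t r (Q2 r (Ωb r T GU))) = Ub t T GU - Ωb t T GU := by
      have h1 := hΩbeq GU t T ht.1 ht.2 le_rfl
      rw [eq_sub_iff_add_eq] at h1
      rw [← h1]; abel
    -- the extended Fubini integrand
    set cl : ℝ → ℝ := fun z => max t (min z T) with hcl
    have hclcont : Continuous cl := continuous_const.max (continuous_id.min continuous_const)
    have hclmem : ∀ z, cl z ∈ Set.Icc t T := fun z =>
      ⟨le_max_left _ _, max_le ht.2 (min_le_right _ _)⟩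
    have hclid : ∀ z ∈ Set.Icc t T, cl z = z := by
      intro z hz
      rw [hcl]
      simp only [min_eq_left hz.2, max_eq_right hz.1]
    set g : ℝ → ℝ → X₂ := fun σ r =>
      Ub t (cl σ) (Q2 (cl σ) (Ωb (min (cl σ) (cl r)) (cl r) (w (max (cl σ) (cl r))))) with hg
    -- continuity of g in σ
    have hgc : ∀ r, Continuous fun σ => g σ r := by
      intro r
      set c : ℝ := cl r with hc
      have hcmem : c ∈ Set.Icc t T := hclmem r
      have hv1 : ContinuousOn (fun s => Ωb (min s c) c (w (max s c))) (Set.Icc t T) := by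
        apply aux_strong_apply_cont (fun s => Ωb (min s c) c) _ MΩb
        · intro s hs
          exact hΩbbdd (min s c) c (le_min (le_trans ht.1 hs.1) (le_trans ht.1 hcmem.1))
            (min_le_right _ _) hcmem.2
        · intro y
          apply ContinuousOn.comp (hΩbsc₁ y c ⟨le_trans ht.1 hcmem.1, hcmem.2⟩)
            (continuous_id.min continuous_const).continuousOn
          intro s hs
          exact ⟨le_min (le_trans ht.1 hs.1) (le_trans ht.1 hcmem.1), min_le_right _ _⟩
        · apply ContinuousOn.comp hwc (continuous_id.max continuous_const).continuousOn
          intro s hs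
          exact ⟨le_trans hcmem.1 (le_max_right _ _), max_le hs.2 hcmem.2⟩
      have hF : ContinuousOn
          (fun s => Ub t s (Q2 s (Ωb (min s c) c (w (max s c))))) (Set.Icc t T) :=
        hUbapply t ht _ (hQ2apply t ht _ hv1)
      have := hF.comp_continuous hclcont hclmem
      exact this
    -- continuity of g in r
    have hgm : ∀ σ, Continuous fun r => g σ r := by
      intro σ
      set d : ℝ := cl σ with hd
      have hdmem : d ∈ Set.Icc t T := hclmem σ
      have hH' : ContinuousOn (fun s => Ωb d (max d s) (w (max d s))) (Set.Icc t T) := by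
        have hbase : ContinuousOn (fun u => Ωb d u (w u)) (Set.Icc d T) :=
          hObapply d ⟨le_trans ht.1 hdmem.1, hdmem.2⟩ _
            (hwc.mono (Set.Icc_subset_Icc_left hdmem.1))
        apply ContinuousOn.comp hbase (continuous_const.max continuous_id).continuousOn
        intro s hs
        exact ⟨le_max_left _ _, max_le hdmem.2 hs.2⟩
      have hH : ContinuousOn (fun s => Ωb (min d s) s (w (max d s))) (Set.Icc t T) := by
        apply hH'.congr
        intro s hs
        rcases le_total d s with h | h
        · simp only [min_eq_left h, max_eq_right h]
        · have h1 : Ωb s s = ContinuousLinearMap.id ℝ X₂ :=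
            hΩbid s ⟨le_trans ht.1 hs.1, hs.2⟩
          have h2 : Ωb d d = ContinuousLinearMap.id ℝ X₂ :=
            hΩbid d ⟨le_trans ht.1 hdmem.1, hdmem.2⟩
          simp only [min_eq_right h, max_eq_left h, h1, h2]
      have hL : Continuous fun u : X₂ => Ub t d (Q2 d u) :=
        (Ub t d).continuous.comp (Q2 d).continuous
      have := (hL.comp_continuousOn hH).comp_continuous hclcont hclmem
      exact this
    -- bound on g
    set Cg : ℝ := MUb * (MQ2 * (MΩb * Cw)) with hCg
    have hgC : ∀ σ r, ‖g σ r‖ ≤ Cg := by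
      intro σ r
      have hσ := hclmem σ
      have hr := hclmem r
      have hmaxmem : max (cl σ) (cl r) ∈ Set.Icc t T :=
        ⟨le_trans hσ.1 (le_max_left _ _), max_le hσ.2 hr.2⟩
      have h1 : ‖w (max (cl σ) (cl r))‖ ≤ Cw := hCw _ hmaxmem
      have h2 : ‖Ωb (min (cl σ) (cl r)) (cl r) (w (max (cl σ) (cl r)))‖ ≤ MΩb * Cw :=
        le_trans ((Ωb _ _).le_of_opNorm_le (hΩbbdd _ _
          (le_min (le_trans ht.1 hσ.1) (le_trans ht.1 hr.1)) (min_le_right _ _) hr.2) _)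
          (mul_le_mul_of_nonneg_left h1 hMOb0)
      have h3 : ‖Q2 (cl σ) (Ωb (min (cl σ) (cl r)) (cl r) (w (max (cl σ) (cl r))))‖ ≤
          MQ2 * (MΩb * Cw) :=
        le_trans ((Q2 _).le_of_opNorm_le (hMQ2 _ ⟨le_trans ht.1 hσ.1, hσ.2⟩) _)
          (mul_le_mul_of_nonneg_left h2 hMQ2_0)
      calc ‖g σ r‖ ≤ MUb * ‖Q2 (cl σ) (Ωb (min (cl σ) (cl r)) (cl r)
            (w (max (cl σ) (cl r))))‖ :=
            (Ub t _).le_of_opNorm_le (hUbbdd t _ ht.1 hσ.1 hσ.2) _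
        _ ≤ MUb * (MQ2 * (MΩb * Cw)) := mul_le_mul_of_nonneg_left h3 hMUb0
    -- Fubini
    have hfub := aux_fubini_triangle t T ht.2 g hgc hgm Cg hgC
    -- step 3 : the double-integral term
    have hdbl : (∫ r in t..T, Ub t r (Q2 r (S r))) =
        ∫ r in t..T, ∫ σ in t..r, Ub t σ (Q2 σ (Ωb σ r (w r))) := by
      calc (∫ r in t..T, Ub t r (Q2 r (S r)))
          = ∫ σ in t..T, ∫ r in σ..T, g σ r := by
            apply intervalIntegral.integral_congr
            intro σ hσ
            rw [Set.uIcc_of_le ht.2] at hσ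
            show Ub t σ (Q2 σ (S σ)) = ∫ r in σ..T, g σ r
            rw [hSint σ hσ]
            apply intervalIntegral.integral_congr
            intro ρ hρ
            rw [Set.uIcc_of_le hσ.2] at hρ
            have h1 : cl σ = σ := hclid σ hσ
            have h2 : cl ρ = ρ := hclid ρ ⟨le_trans hσ.1 hρ.1, hρ.2⟩
            show Ub t σ (Q2 σ (Ωb σ ρ (w ρ))) = g σ ρ
            rw [hg]
            simp only [h1, h2, min_eq_left hρ.1, max_eq_right hρ.1]
        _ = ∫ r in t..T, ∫ σ in t..r, g σ r := hfub.symm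
        _ = ∫ r in t..T, ∫ σ in t..r, Ub t σ (Q2 σ (Ωb σ r (w r))) := by
            apply intervalIntegral.integral_congr
            intro r hr
            rw [Set.uIcc_of_le ht.2] at hr
            show (∫ σ in t..r, g σ r) = ∫ σ in t..r, Ub t σ (Q2 σ (Ωb σ r (w r)))
            apply intervalIntegral.integral_congr
            intro σ hσ
            rw [Set.uIcc_of_le hr.1] at hσ
            have h1 : cl σ = σ := hclid σ ⟨hσ.1, le_trans hσ.2 hr.2⟩
            have h2 : cl r = r := hclid r hr
            show g σ r = Ub t σ (Q2 σ (Ωb σ r (w r)))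
            rw [hg]
            simp only [h1, h2, min_eq_left hσ.2, max_eq_right hσ.2]
    -- step 4 : recombine with the Ωb-equation
    have hIdbl : IntervalIntegrable
        (fun r => ∫ σ in t..r, Ub t σ (Q2 σ (Ωb σ r (w r)))) volume t T := by
      have heqon : Set.EqOn (fun r => Ub t r (w r) - Ωb t r (w r))
          (fun r => ∫ σ in t..r, Ub t σ (Q2 σ (Ωb σ r (w r)))) (Set.uIcc t T) := by
        intro r hr
        rw [Set.uIcc_of_le ht.2] at hr
        have h1 := hΩbeq (w r) t r ht.1 hr.1 hr.2
        rw [eq_sub_iff_add_eq] at h1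
        simp only
        rw [← h1]; abel
      have hcd : ContinuousOn (fun r => Ub t r (w r) - Ωb t r (w r)) (Set.Icc t T) :=
        (hUbapply t ht _ hwc).sub (hObapply t ht _ hwc)
      apply ContinuousOn.intervalIntegrable
      rw [Set.uIcc_of_le ht.2]
      apply hcd.congr
      intro r hr
      exact (heqon (by rwa [Set.uIcc_of_le ht.2])).symm
    have hstep4 : (∫ r in t..T, Ub t r (w r)) -
        (∫ r in t..T, ∫ σ in t..r, Ub t σ (Q2 σ (Ωb σ r (w r)))) =
        ∫ r in t..T, Ωb t r (w r) := by
      rw [← intervalIntegral.integral_sub hIw hIdbl]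
      apply intervalIntegral.integral_congr
      intro r hr
      rw [Set.uIcc_of_le ht.2] at hr
      exact (hΩbeq (w r) t r ht.1 hr.1 hr.2).symm
    -- assemble everything
    rw [hPx t ht x]
    rw [hstep1, hq, hdbl, ← hGU]
    have hfin : (∫ r in t..T, Ωb t r (Q12 r (Ul r t x))) = ∫ r in t..T, Ωb t r (w r) := by
      apply intervalIntegral.integral_congr
      intro r hr
      simp only [hw]
    rw [hfin, ← hstep4]
    abel

  refine ⟨P, hPcont, hPx, hPeq, ?_⟩
  -- bullet 4 : uniqueness
  intro Q hQcont hQeq t ht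
  obtain ⟨MQ, hMQ0, hMQb⟩ := aux_bs 0 T Q hQcont
  ext x
  set y : ℝ → X₂ := fun s => Q s (Ul s t x) - P s (Ul s t x) with hy
  have hymem : ∀ s ∈ Set.Icc t T, s ∈ Set.Icc (0:ℝ) T :=
    fun s hs => ⟨le_trans ht.1 hs.1, hs.2⟩
  have hQpath : ContinuousOn (fun r => Q r (Ul r t x)) (Set.Icc t T) :=
    aux_strong_apply_cont Q _ MQ (fun r hr => hMQb r (hymem r hr))
      (fun z => (hQcont z).mono (Set.Icc_subset_Icc_left ht.1)) (hUlsc₁ x t ht)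
  have hPpath : ContinuousOn (fun r => P r (Ul r t x)) (Set.Icc t T) :=
    hPapply t ht _ (hUlsc₁ x t ht)
  have hycont : ContinuousOn y (Set.Icc t T) := hQpath.sub hPpath
  have hyeq : ∀ s ∈ Set.Icc t T, y s = -∫ r in s..T, Ub s r (Q2 r (y r)) := by
    intro s hs
    have hs' : s ∈ Set.Icc (0:ℝ) T := hymem s hs
    have hcompG : Ul T s (Ul s t x) = Ul T t x := by
      rw [hUlcomp t s T ht.1 hs.1 hs.2 le_rfl]; rfl
    have hQ1 : Q s (Ul s t x) = Ub s T (G (Ul T t x)) +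
        ∫ r in s..T, Ub s r (Q12 r (Ul r t x) - Q2 r (Q r (Ul r t x))) := by
      rw [hQeq s hs' (Ul s t x), hcompG]
      congr 1
      apply intervalIntegral.integral_congr
      intro r hr
      rw [Set.uIcc_of_le hs.2] at hr
      have hcr : Ul r s (Ul s t x) = Ul r t x := by
        rw [hUlcomp t s r ht.1 hs.1 hr.1 hr.2]; rfl
      simp only [hcr]
    have hP1 : P s (Ul s t x) = Ub s T (G (Ul T t x)) +
        ∫ r in s..T, Ub s r (Q12 r (Ul r t x) - Q2 r (P r (Ul r t x))) := by
      rw [hPeq s hs' (Ul s t x), hcompG]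
      congr 1
      apply intervalIntegral.integral_congr
      intro r hr
      rw [Set.uIcc_of_le hs.2] at hr
      have hcr : Ul r s (Ul s t x) = Ul r t x := by
        rw [hUlcomp t s r ht.1 hs.1 hr.1 hr.2]; rfl
      simp only [hcr]
    have hIQ : IntervalIntegrable
        (fun r => Ub s r (Q12 r (Ul r t x) - Q2 r (Q r (Ul r t x)))) volume s T := by
      apply ContinuousOn.intervalIntegrable
      rw [Set.uIcc_of_le hs.2]
      apply hUbapply s hs'
      exact ((hwcont t ht x).mono (Set.Icc_subset_Icc_left hs.1)).sub
        (hQ2apply s hs' _ (hQpath.mono (Set.Icc_subset_Icc_left hs.1)))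
    have hIP : IntervalIntegrable
        (fun r => Ub s r (Q12 r (Ul r t x) - Q2 r (P r (Ul r t x)))) volume s T := by
      apply ContinuousOn.intervalIntegrable
      rw [Set.uIcc_of_le hs.2]
      apply hUbapply s hs'
      exact ((hwcont t ht x).mono (Set.Icc_subset_Icc_left hs.1)).sub
        (hQ2apply s hs' _ (hPpath.mono (Set.Icc_subset_Icc_left hs.1)))
    have hfirst : y s = (∫ r in s..T, Ub s r (Q12 r (Ul r t x) - Q2 r (Q r (Ul r t x)))) -
        ∫ r in s..T, Ub s r (Q12 r (Ul r t x) - Q2 r (P r (Ul r t x))) := by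
      show Q s (Ul s t x) - P s (Ul s t x) = _
      rw [hQ1, hP1]; abel
    calc y s = (∫ r in s..T, Ub s r (Q12 r (Ul r t x) - Q2 r (Q r (Ul r t x)))) -
        ∫ r in s..T, Ub s r (Q12 r (Ul r t x) - Q2 r (P r (Ul r t x))) := hfirst
      _ = ∫ r in s..T, (Ub s r (Q12 r (Ul r t x) - Q2 r (Q r (Ul r t x))) -
          Ub s r (Q12 r (Ul r t x) - Q2 r (P r (Ul r t x)))) :=
        (intervalIntegral.integral_sub hIQ hIP).symm
      _ = ∫ r in s..T, -(Ub s r (Q2 r (y r))) := by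
          apply intervalIntegral.integral_congr
          intro r hr
          simp only [hy, map_sub]
          abel
      _ = -∫ r in s..T, Ub s r (Q2 r (y r)) := intervalIntegral.integral_neg
  have hyineq : ∀ s ∈ Set.Icc t T, ‖y s‖ ≤ (MUb * MQ2) * ∫ r in s..T, ‖y r‖ := by
    intro s hs
    have hs' : s ∈ Set.Icc (0:ℝ) T := hymem s hs
    have hI1 : IntervalIntegrable (fun r => ‖Ub s r (Q2 r (y r))‖) volume s T := by
      apply ContinuousOn.intervalIntegrable
      rw [Set.uIcc_of_le hs.2]
      exact (hUbapply s hs' _ (hQ2apply s hs' _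
        (hycont.mono (Set.Icc_subset_Icc_left hs.1)))).norm
    have hI2 : IntervalIntegrable (fun r => (MUb * MQ2) * ‖y r‖) volume s T := by
      apply ContinuousOn.intervalIntegrable
      rw [Set.uIcc_of_le hs.2]
      exact continuousOn_const.mul ((hycont.norm).mono (Set.Icc_subset_Icc_left hs.1))
    rw [hyeq s hs, norm_neg]
    calc ‖∫ r in s..T, Ub s r (Q2 r (y r))‖ ≤ ∫ r in s..T, ‖Ub s r (Q2 r (y r))‖ :=
        intervalIntegral.norm_integral_le_integral_norm hs.2
      _ ≤ ∫ r in s..T, (MUb * MQ2) * ‖y r‖ := by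
          apply intervalIntegral.integral_mono_on hs.2 hI1 hI2
          intro r hr
          calc ‖Ub s r (Q2 r (y r))‖ ≤ MUb * ‖Q2 r (y r)‖ :=
              (Ub s r).le_of_opNorm_le (hUbbdd s r hs'.1 hr.1 hr.2) _
            _ ≤ MUb * (MQ2 * ‖y r‖) := mul_le_mul_of_nonneg_left
                ((Q2 r).le_of_opNorm_le (hMQ2 r ⟨le_trans hs'.1 hr.1, hr.2⟩) _) hMUb0
            _ = (MUb * MQ2) * ‖y r‖ := by ring
      _ = (MUb * MQ2) * ∫ r in s..T, ‖y r‖ := intervalIntegral.integral_const_mul _ _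
  have hy0 := aux_gronwall t T (MUb * MQ2) ht.2 (by positivity) y hycont.norm hyineq
  have hyt := hy0 t ⟨le_rfl, ht.2⟩
  have hUlid' : Ul t t x = x := by rw [hUlid t ht]; rfl
  simp only [hy, hUlid'] at hyt
  exact sub_eq_zero.mp hyt
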